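/- For any real sequence g_1,...,g_T, define A_t = sum_{i=1}^t g_i^2 and assume A_t > 0 for all t. Then sqrt(A_T) <= sum_{t=1}^T g_t^2 / sqrt(A_t) <= 2*sqrt(A_T). -/

import Mathlib

theorem stmt0 (T : ℕ) (hT : 1 ≤ T) (g : ℕ → ℝ) (A : ℕ → ℝ)
    (hA : ∀ t, A t = ∑ i ∈ Finset.Icc 1 t, (g i) ^ 2)
    (hpos : ∀ t, 1 ≤ t → t ≤ T → 0 < A t) :
    Real.sqrt (A T) ≤ (∑ t ∈ Finset.Icc 1 T, (g t) ^ 2 / Real.sqrt (A t)) ∧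
      (∑ t ∈ Finset.Icc 1 T, (g t) ^ 2 / Real.sqrt (A t)) ≤ 2 * Real.sqrt (A T) := by
  have hA0 : A 0 = 0 := by simp [hA]
  have hAnn : ∀ t, 0 ≤ A t := by
    intro t
    rw [hA]
    exact Finset.sum_nonneg fun i _ => sq_nonneg _
  have hstep : ∀ s : ℕ, A (s + 1) = A s + g (s + 1) ^ 2 := by
    intro s
    rw [hA, hA, Finset.sum_Icc_succ_top (Nat.le_add_left 1 s)]
  -- key pointwise bounds for 1 ≤ t ≤ T
  have key : ∀ t, 1 ≤ t → t ≤ T →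
      (Real.sqrt (A t) - Real.sqrt (A (t - 1)) ≤ g t ^ 2 / Real.sqrt (A t) ∧
       g t ^ 2 / Real.sqrt (A t) ≤ 2 * (Real.sqrt (A t) - Real.sqrt (A (t - 1)))) := by
    intro t ht1 htT
    obtain ⟨s, rfl⟩ : ∃ s, t = s + 1 := ⟨t - 1, (Nat.succ_pred_eq_of_pos ht1).symm⟩
    simp only [Nat.add_sub_cancel]
    set a := Real.sqrt (A s) with ha
    set b := Real.sqrt (A (s + 1)) with hb
    have hbpos : 0 < b := Real.sqrt_pos.mpr (hpos _ (Nat.le_add_left 1 s) htT)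
    have hann : 0 ≤ a := Real.sqrt_nonneg _
    have hab : a ≤ b := Real.sqrt_le_sqrt (by nlinarith [hstep s, sq_nonneg (g (s+1))])
    have ha2 : a ^ 2 = A s := Real.sq_sqrt (hAnn s)
    have hb2 : b ^ 2 = A (s + 1) := Real.sq_sqrt (hAnn (s + 1))
    have hg : g (s + 1) ^ 2 = b ^ 2 - a ^ 2 := by rw [ha2, hb2, hstep s]; ring
    constructor
    · rw [le_div_iff₀ hbpos]
      nlinarith
    · rw [div_le_iff₀ hbpos]
      nlinarith
  -- rewrite sums over Icc 1 T as sums over range T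
  have hsum : ∀ f : ℕ → ℝ, ∑ t ∈ Finset.Icc 1 T, f t = ∑ i ∈ Finset.range T, f (i + 1) := by
    intro f
    rw [← Finset.Ico_add_one_right_eq_Icc, Finset.sum_Ico_eq_sum_range]
    simp [add_comm]
  have htel : ∑ i ∈ Finset.range T, (Real.sqrt (A (i + 1)) - Real.sqrt (A i))
      = Real.sqrt (A T) := by
    rw [Finset.sum_range_sub (fun i => Real.sqrt (A i)), hA0, Real.sqrt_zero, sub_zero]
  constructor
  · rw [hsum, ← htel]
    apply Finset.sum_le_sum
    intro i hi
    have := (key (i + 1) (Nat.le_add_left 1 i) (Finset.mem_range.mp hi)).1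
    simpa using this
  · rw [hsum]
    calc ∑ i ∈ Finset.range T, g (i + 1) ^ 2 / Real.sqrt (A (i + 1))
        ≤ ∑ i ∈ Finset.range T, 2 * (Real.sqrt (A (i + 1)) - Real.sqrt (A i)) := by
          apply Finset.sum_le_sum
          intro i hi
          have := (key (i + 1) (Nat.le_add_left 1 i) (Finset.mem_range.mp hi)).2
          simpa using this
      _ = 2 * Real.sqrt (A T) := by rw [← Finset.mul_sum, htel]
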